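/- Let T > 0, R > 0. The second derivative of A(Q) = √T·(ln(1+Q) - R·ln 2)/√(1 - 1/(1+Q)²) satisfies A''(Q) = (√T/(1+Q))·[3(ln(1+Q) - R·ln 2)/((1+Q)²-1)^{5/2} + 3(ln(1+Q) - R·ln 2)/((1+Q)²-1)^{3/2} - 2/((1+Q)²-1)^{3/2} - 1/((1+Q)²-1)^{1/2}], and A''(Q) < 0 whenever Q > Q₀, where Q₀ is the unique positive solution of ln(1+Q)/((1+Q)² - 1) = 1/3. -/

import Mathlib

lemma first_deriv (c : ℝ) {x : ℝ} (hx : 0 < x) :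
    HasDerivAt (fun Q : ℝ => (Real.log (1 + Q) - c) * (1 + Q) / Real.sqrt ((1 + Q) ^ 2 - 1))
      (1 / Real.sqrt ((1 + x) ^ 2 - 1)
        - (Real.log (1 + x) - c) / (Real.sqrt ((1 + x) ^ 2 - 1)) ^ 3) x := by
  have hu : (0:ℝ) < 1 + x := by linarith
  have hv : (0:ℝ) < (1 + x) ^ 2 - 1 := by nlinarith
  set s := Real.sqrt ((1 + x) ^ 2 - 1) with hs
  have hspos : 0 < s := Real.sqrt_pos.mpr hv
  have hs2 : s ^ 2 = (1 + x) ^ 2 - 1 := Real.sq_sqrt hv.le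
  have h1 : HasDerivAt (fun Q : ℝ => 1 + Q) 1 x := by
    simpa using (hasDerivAt_id x).const_add 1
  have hlog : HasDerivAt (fun Q : ℝ => Real.log (1 + Q)) (1 / (1 + x)) x :=
    h1.log hu.ne'
  have hN : HasDerivAt (fun Q : ℝ => (Real.log (1 + Q) - c) * (1 + Q))
      ((1 / (1 + x)) * (1 + x) + (Real.log (1 + x) - c) * 1) x :=
    (hlog.sub_const c).mul h1
  have hV : HasDerivAt (fun Q : ℝ => (1 + Q) ^ 2 - 1) (2 * (1 + x)) x := by
    have := (h1.pow 2).sub_const 1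
    simpa using this
  have hS : HasDerivAt (fun Q : ℝ => Real.sqrt ((1 + Q) ^ 2 - 1))
      (2 * (1 + x) / (2 * s)) x := hV.sqrt hv.ne'
  have hD := hN.div hS hspos.ne'
  refine hD.congr_deriv ?_
  symm
  rw [← hs]
  field_simp


  linear_combination (-(Real.log (1 + x) - c)) * hs2


lemma second_deriv (c : ℝ) {x : ℝ} (hx : 0 < x) :
    HasDerivAt (fun Q : ℝ => 1 / Real.sqrt ((1 + Q) ^ 2 - 1)
        - (Real.log (1 + Q) - c) / (Real.sqrt ((1 + Q) ^ 2 - 1)) ^ 3)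
      ((1 / (1 + x)) *
        (3 * (Real.log (1 + x) - c) / (Real.sqrt ((1 + x) ^ 2 - 1)) ^ 5
         + 3 * (Real.log (1 + x) - c) / (Real.sqrt ((1 + x) ^ 2 - 1)) ^ 3
         - 2 / (Real.sqrt ((1 + x) ^ 2 - 1)) ^ 3
         - 1 / Real.sqrt ((1 + x) ^ 2 - 1))) x := by
  have hu : (0:ℝ) < 1 + x := by linarith
  have hv : (0:ℝ) < (1 + x) ^ 2 - 1 := by nlinarith
  set s := Real.sqrt ((1 + x) ^ 2 - 1) with hs
  have hspos : 0 < s := Real.sqrt_pos.mpr hv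
  have hs2 : s ^ 2 = (1 + x) ^ 2 - 1 := Real.sq_sqrt hv.le
  have h1 : HasDerivAt (fun Q : ℝ => 1 + Q) 1 x := by
    simpa using (hasDerivAt_id x).const_add 1
  have hlog : HasDerivAt (fun Q : ℝ => Real.log (1 + Q)) (1 / (1 + x)) x :=
    h1.log hu.ne'
  have hV : HasDerivAt (fun Q : ℝ => (1 + Q) ^ 2 - 1) (2 * (1 + x)) x := by
    have := (h1.pow 2).sub_const 1
    simpa using this
  have hS : HasDerivAt (fun Q : ℝ => Real.sqrt ((1 + Q) ^ 2 - 1))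
      (2 * (1 + x) / (2 * s)) x := hV.sqrt hv.ne'
  have hS3 : HasDerivAt (fun Q : ℝ => (Real.sqrt ((1 + Q) ^ 2 - 1)) ^ 3)
      (3 * s ^ 2 * (2 * (1 + x) / (2 * s))) x := by
    refine (hS.pow 3).congr_deriv ?_
    simp [hs]
  have hT1 : HasDerivAt (fun Q : ℝ => 1 / Real.sqrt ((1 + Q) ^ 2 - 1))
      ((0 * s - 1 * (2 * (1 + x) / (2 * s))) / s ^ 2) x :=
    (hasDerivAt_const x 1).div hS hspos.ne'
  have hT2 : HasDerivAt (fun Q : ℝ => (Real.log (1 + Q) - c) / (Real.sqrt ((1 + Q) ^ 2 - 1)) ^ 3)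
      (((1 / (1 + x)) * s ^ 3 - (Real.log (1 + x) - c) * (3 * s ^ 2 * (2 * (1 + x) / (2 * s)))) /
        (s ^ 3) ^ 2) x :=
    (hlog.sub_const c).div hS3 (by positivity)
  have hD := hT1.sub hT2
  refine hD.congr_deriv ?_
  symm
  have hune : (1 + x) ≠ 0 := hu.ne'
  field_simp

  linear_combination (3 * (Real.log (1 + x) - c) - s ^ 2) * hs2

lemma rpow_half_nat {v : ℝ} (hv : 0 ≤ v) (n : ℕ) :
    v ^ ((n : ℝ) / 2) = Real.sqrt v ^ n := by
  rw [Real.sqrt_eq_rpow, ← Real.rpow_natCast (v ^ ((1:ℝ)/2)) n, ← Real.rpow_mul hv]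
  ring_nf

lemma fun_eventually (T c : ℝ) {x : ℝ} (hx : 0 < x) :
    Real.sqrt T * (Real.log (1 + x) - c) / Real.sqrt (1 - 1 / (1 + x) ^ 2)
      = Real.sqrt T * ((Real.log (1 + x) - c) * (1 + x) / Real.sqrt ((1 + x) ^ 2 - 1)) := by
  have hu : (0:ℝ) < 1 + x := by linarith
  have hv : (0:ℝ) < (1 + x) ^ 2 - 1 := by nlinarith
  have h1 : 1 - 1 / (1 + x) ^ 2 = ((1 + x) ^ 2 - 1) / (1 + x) ^ 2 := by
    field_simp
  rw [h1, Real.sqrt_div hv.le, Real.sqrt_sq hu.le]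
  have hspos : 0 < Real.sqrt ((1 + x) ^ 2 - 1) := Real.sqrt_pos.mpr hv
  field_simp

lemma key_lt (Q₀ Q : ℝ) (hQ₀ : 0 < Q₀)
    (hQ₀uniq : ∀ x : ℝ, 0 < x → Real.log (1 + x) / ((1 + x) ^ 2 - 1) = 1 / 3 → x = Q₀)
    (hQ : Q₀ < Q) : 3 * Real.log (1 + Q) < (1 + Q) ^ 2 - 1 := by
  have hQpos : 0 < Q := lt_trans hQ₀ hQ
  have hv : (0:ℝ) < (1 + Q) ^ 2 - 1 := by nlinarith
  have hlt : Real.log (1 + Q) / ((1 + Q) ^ 2 - 1) < 1 / 3 := by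
    by_contra hcon
    push_neg at hcon
    rcases eq_or_lt_of_le hcon with heq | hgt
    · have := hQ₀uniq Q hQpos heq.symm
      linarith
    · set b := max (Q + 1) 2 with hb
      have hbQ : Q ≤ b := le_trans (by linarith) (le_max_left _ _)
      have hb2 : (2:ℝ) ≤ b := le_max_right _ _
      have hfb : Real.log (1 + b) / ((1 + b) ^ 2 - 1) < 1 / 3 := by
        have hlog : Real.log (1 + b) ≤ b := by
          have := Real.log_le_sub_one_of_pos (x := 1 + b) (by linarith)
          linarith
        have hden : (0:ℝ) < (1 + b) ^ 2 - 1 := by nlinarith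
        rw [div_lt_iff₀ hden]
        nlinarith
      have h1c : ContinuousOn (fun x : ℝ => (1:ℝ) + x) (Set.Icc Q b) :=
        (continuous_const.add continuous_id).continuousOn
      have hcont : ContinuousOn
          (fun x : ℝ => Real.log (1 + x) / ((1 + x) ^ 2 - 1)) (Set.Icc Q b) := by
        apply ContinuousOn.div
        · exact h1c.log (fun x hx => ne_of_gt (show (0:ℝ) < 1 + x by have h := hx.1; linarith))
        · exact (h1c.pow 2).sub continuousOn_const
        · intro x hx
          have := hx.1
          nlinarith
      have hmem : (1:ℝ)/3 ∈ Set.Icc (Real.log (1 + b) / ((1 + b) ^ 2 - 1))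
          (Real.log (1 + Q) / ((1 + Q) ^ 2 - 1)) := ⟨hfb.le, hcon⟩
      obtain ⟨ξ, hξmem, hξeq⟩ := intermediate_value_Icc' hbQ hcont hmem
      have hξpos : 0 < ξ := lt_of_lt_of_le hQpos hξmem.1
      have h1 := hQ₀uniq ξ hξpos hξeq
      have h2 : Q₀ < ξ := lt_of_lt_of_le hQ hξmem.1
      linarith
  rw [div_lt_iff₀ hv] at hlt
  linarith

theorem A_second_deriv (T R Q₀ : ℝ) (hT : 0 < T) (hR : 0 < R)
    (hQ₀ : 0 < Q₀) (hQ₀eq : Real.log (1 + Q₀) / ((1 + Q₀) ^ 2 - 1) = 1 / 3)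
    (hQ₀uniq : ∀ Q : ℝ, 0 < Q → Real.log (1 + Q) / ((1 + Q) ^ 2 - 1) = 1 / 3 → Q = Q₀) :
    ∀ Q : ℝ, Q₀ < Q →
      deriv (deriv (fun Q : ℝ =>
          Real.sqrt T * (Real.log (1 + Q) - R * Real.log 2) /
            Real.sqrt (1 - 1 / (1 + Q) ^ 2))) Q
        = (Real.sqrt T / (1 + Q)) *
            (3 * (Real.log (1 + Q) - R * Real.log 2) / ((1 + Q) ^ 2 - 1) ^ ((5:ℝ)/2)
             + 3 * (Real.log (1 + Q) - R * Real.log 2) / ((1 + Q) ^ 2 - 1) ^ ((3:ℝ)/2)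
             - 2 / ((1 + Q) ^ 2 - 1) ^ ((3:ℝ)/2)
             - 1 / ((1 + Q) ^ 2 - 1) ^ ((1:ℝ)/2)) ∧
      deriv (deriv (fun Q : ℝ =>
          Real.sqrt T * (Real.log (1 + Q) - R * Real.log 2) /
            Real.sqrt (1 - 1 / (1 + Q) ^ 2))) Q < 0 := by
  intro Q hQ
  set c := R * Real.log 2 with hc
  have hQpos : 0 < Q := lt_trans hQ₀ hQ
  have hu : (0:ℝ) < 1 + Q := by linarith
  have hv : (0:ℝ) < (1 + Q) ^ 2 - 1 := by nlinarith
  set s := Real.sqrt ((1 + Q) ^ 2 - 1) with hsdef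
  have hspos : 0 < s := Real.sqrt_pos.mpr hv
  have hs2 : s ^ 2 = (1 + Q) ^ 2 - 1 := Real.sq_sqrt hv.le
  set f := fun Q : ℝ =>
      Real.sqrt T * (Real.log (1 + Q) - c) / Real.sqrt (1 - 1 / (1 + Q) ^ 2) with hf
  set A₁ := fun x : ℝ => Real.sqrt T *
      (1 / Real.sqrt ((1 + x) ^ 2 - 1)
        - (Real.log (1 + x) - c) / (Real.sqrt ((1 + x) ^ 2 - 1)) ^ 3) with hA₁
  -- deriv f = A₁ on positive reals
  have hderiv1 : ∀ x : ℝ, 0 < x → deriv f x = A₁ x := by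
    intro x hx
    have hg : HasDerivAt (fun Q : ℝ => Real.sqrt T *
        ((Real.log (1 + Q) - c) * (1 + Q) / Real.sqrt ((1 + Q) ^ 2 - 1)))
        (Real.sqrt T *
          (1 / Real.sqrt ((1 + x) ^ 2 - 1)
            - (Real.log (1 + x) - c) / (Real.sqrt ((1 + x) ^ 2 - 1)) ^ 3)) x :=
      (first_deriv c hx).const_mul _
    have hfg : f =ᶠ[nhds x] (fun Q : ℝ => Real.sqrt T *
        ((Real.log (1 + Q) - c) * (1 + Q) / Real.sqrt ((1 + Q) ^ 2 - 1))) := by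
      filter_upwards [IsOpen.mem_nhds isOpen_Ioi (Set.mem_Ioi.mpr hx)] with y hy
      exact fun_eventually T c (Set.mem_Ioi.mp hy)
    exact ((hg.congr_of_eventuallyEq hfg).deriv)
  have hev : deriv f =ᶠ[nhds Q] A₁ := by
    filter_upwards [IsOpen.mem_nhds isOpen_Ioi (Set.mem_Ioi.mpr hQpos)] with y hy
    exact hderiv1 y (Set.mem_Ioi.mp hy)
  have h2 : HasDerivAt A₁
      (Real.sqrt T * ((1 / (1 + Q)) *
        (3 * (Real.log (1 + Q) - c) / s ^ 5
         + 3 * (Real.log (1 + Q) - c) / s ^ 3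
         - 2 / s ^ 3 - 1 / s))) Q :=
    (second_deriv c hQpos).const_mul _
  have hmain : deriv (deriv f) Q
      = Real.sqrt T * ((1 / (1 + Q)) *
        (3 * (Real.log (1 + Q) - c) / s ^ 5
         + 3 * (Real.log (1 + Q) - c) / s ^ 3
         - 2 / s ^ 3 - 1 / s)) := by
    rw [hev.deriv_eq]
    exact h2.deriv
  -- rewrite rpow powers
  have hr5 : ((1 + Q) ^ 2 - 1) ^ ((5:ℝ)/2) = s ^ 5 := by
    have := rpow_half_nat hv.le 5; norm_num at this; rw [← this]
  have hr3 : ((1 + Q) ^ 2 - 1) ^ ((3:ℝ)/2) = s ^ 3 := by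
    have := rpow_half_nat hv.le 3; norm_num at this; rw [← this]
  have hr1 : ((1 + Q) ^ 2 - 1) ^ ((1:ℝ)/2) = s := by
    have := rpow_half_nat hv.le 1; norm_num at this; rw [hsdef]; exact this
  have hEq : deriv (deriv f) Q
      = (Real.sqrt T / (1 + Q)) *
            (3 * (Real.log (1 + Q) - c) / ((1 + Q) ^ 2 - 1) ^ ((5:ℝ)/2)
             + 3 * (Real.log (1 + Q) - c) / ((1 + Q) ^ 2 - 1) ^ ((3:ℝ)/2)
             - 2 / ((1 + Q) ^ 2 - 1) ^ ((3:ℝ)/2)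
             - 1 / ((1 + Q) ^ 2 - 1) ^ ((1:ℝ)/2)) := by
    rw [hmain, hr5, hr3, hr1]; ring
  refine ⟨hEq, ?_⟩
  -- negativity
  have hkey : 3 * Real.log (1 + Q) < (1 + Q) ^ 2 - 1 :=
    key_lt Q₀ Q hQ₀ hQ₀uniq hQ
  have hL : 3 * (Real.log (1 + Q) - c) < s ^ 2 := by
    have hc' : 0 < c := by
      rw [hc]; positivity
    rw [hs2]; linarith
  have hEneg : (3 * (Real.log (1 + Q) - c) / ((1 + Q) ^ 2 - 1) ^ ((5:ℝ)/2)
             + 3 * (Real.log (1 + Q) - c) / ((1 + Q) ^ 2 - 1) ^ ((3:ℝ)/2)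
             - 2 / ((1 + Q) ^ 2 - 1) ^ ((3:ℝ)/2)
             - 1 / ((1 + Q) ^ 2 - 1) ^ ((1:ℝ)/2)) < 0 := by
    rw [hr5, hr3, hr1]
    have hrw : (3 * (Real.log (1 + Q) - c) / s ^ 5
             + 3 * (Real.log (1 + Q) - c) / s ^ 3 - 2 / s ^ 3 - 1 / s)
        = (3 * (Real.log (1 + Q) - c) - s ^ 2) * (1 / s ^ 5 + 1 / s ^ 3) - 1 / s ^ 3 := by
      field_simp
      ring
    rw [hrw]
    have h1 : (3 * (Real.log (1 + Q) - c) - s ^ 2) * (1 / s ^ 5 + 1 / s ^ 3) < 0 :=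
      mul_neg_of_neg_of_pos (by linarith) (by positivity)
    have h2 : (0:ℝ) < 1 / s ^ 3 := by positivity
    linarith
  rw [hEq]
  exact mul_neg_of_pos_of_neg (by positivity) hEneg
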